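/- When Q₁ = q², the 9×9 R-matrix of the deformed oscillator covariance is triangular, i.e. R₁₂⁻¹ = R₂₁, where R₂₁ = P R P with P the flip on V⊗V. Equivalently, R·(PRP) = 1. -/

import Mathlib

/-- The 9×9 R-matrix of the deformed oscillator covariance,
rows/columns indexed by pairs from `Fin 3` (0,1,2 standing for 1,2,3). -/
noncomputable def Rmat {K : Type*} [Field K] (q Q1 : K) :
    Matrix (Fin 3 × Fin 3) (Fin 3 × Fin 3) K := fun r c =>
  if r = ((0 : Fin 3), (0 : Fin 3)) ∧ c = ((0 : Fin 3), (0 : Fin 3)) then 1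
  else if r = (0, 1) ∧ c = (0, 1) then Q1 ^ 2 / q ^ 2
  else if r = (0, 2) ∧ c = (0, 2) then Q1 / q
  else if r = (1, 0) ∧ c = (0, 1) then (q ^ 2 - Q1) / q ^ 2
  else if r = (1, 0) ∧ c = (1, 0) then 1 / Q1
  else if r = (1, 1) ∧ c = (1, 1) then 1
  else if r = (1, 2) ∧ c = (1, 2) then 1 / q
  else if r = (1, 2) ∧ c = (2, 1) then (q ^ 2 - Q1) / q ^ 2
  else if r = (2, 0) ∧ c = (0, 2) then (q ^ 2 - Q1) / q ^ 2
  else if r = (2, 0) ∧ c = (2, 0) then 1 / q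
  else if r = (2, 1) ∧ c = (2, 1) then Q1 / q
  else if r = (2, 2) ∧ c = (0, 1) then Q1 / q ^ 2
  else if r = (2, 2) ∧ c = (1, 0) then -(1 / Q1)
  else if r = (2, 2) ∧ c = (2, 2) then 1
  else 0

/-- The flip (permutation) matrix `P` on `V ⊗ V`. -/
noncomputable def Pflip {K : Type*} [Field K] :
    Matrix (Fin 3 × Fin 3) (Fin 3 × Fin 3) K := fun r c =>
  if r.1 = c.2 ∧ r.2 = c.1 then 1 else 0


private lemma Pflip_mul_mul_Pflip {K : Type*} [Field K]
    (M : Matrix (Fin 3 × Fin 3) (Fin 3 × Fin 3) K) (r c : Fin 3 × Fin 3) :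
    ((Pflip * M * Pflip : Matrix (Fin 3 × Fin 3) (Fin 3 × Fin 3) K)) r c
      = M r.swap c.swap := by
  have hP : (Pflip : Matrix (Fin 3 × Fin 3) (Fin 3 × Fin 3) K)
      = fun r c => if c = Prod.swap r then 1 else 0 := by
    funext a b
    simp only [Pflip, Prod.ext_iff, Prod.swap]
    aesop
  simp only [Matrix.mul_apply]
  simp [Matrix.mul_apply, hP, eq_comm (a := c), Prod.swap_eq_iff_eq_swap,
    Finset.sum_ite_eq, Finset.sum_ite_eq']

set_option maxHeartbeats 1000000 in
/-- when `Q₁ = q²`, the R-matrix is triangular: `R · (P R P) = 1`,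
i.e. `R₁₂⁻¹ = R₂₁`. -/
theorem Rmat_triangular {K : Type*} [Field K] (q : K) (hq : q ≠ 0) :
    Rmat q (q ^ 2) * (Pflip * Rmat q (q ^ 2) * Pflip) = 1 := by
  ext ⟨i, j⟩ ⟨k, l⟩
  rw [Matrix.mul_apply]
  simp only [Pflip_mul_mul_Pflip, Fintype.sum_prod_type, Fin.sum_univ_three,
    Prod.swap_prod_mk]
  simp only [Rmat, Prod.mk.injEq, Matrix.one_apply]
  norm_num
  fin_cases i <;> fin_cases j <;> fin_cases k <;> fin_cases l <;>
    simp <;> (field_simp; try ring)
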